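/- For any distribution function F with finite mean μ and finite positive variance σ², and for integers k ≥ 1, n ≥ 0, the expectation of the n-th k-th record value satisfies E[(R_n^{(k)} − μ)/σ] ≤ (k^{2(n+1)}(2n)!/((n!)²(2k−1)^{2n+1}) − 1)^{1/2}. -/

import Mathlib

open MeasureTheory Real

/-- Density of the n-th value of the k-th record from a standard uniform parent. -/
noncomputable def recg (k n : ℕ) (x : ℝ) : ℝ :=
  (k : ℝ) ^ (n + 1) / (Nat.factorial n) * (-Real.log (1 - x)) ^ n * (1 - x) ^ (k - 1)

section aux
open Set

lemma phi_img : (fun t : ℝ => 1 - Real.exp (-t)) '' Set.Ioi 0 = Set.Ioo (0:ℝ) 1 := by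
  ext u
  constructor
  · rintro ⟨t, ht, rfl⟩
    have h1 : Real.exp (-t) < 1 := by
      rw [Real.exp_lt_one_iff]; simpa using ht
    have h2 : 0 < Real.exp (-t) := Real.exp_pos _
    simp only [Set.mem_Ioo]
    exact ⟨by linarith, by linarith⟩
  · rintro ⟨h0, h1⟩
    refine ⟨-Real.log (1 - u), ?_, ?_⟩
    · simp only [Set.mem_Ioi]
      have : Real.log (1 - u) < 0 := Real.log_neg (by linarith) (by linarith)
      linarith
    · simp [Real.exp_log (by linarith : (0:ℝ) < 1 - u)]

lemma phi_inj : Set.InjOn (fun t : ℝ => 1 - Real.exp (-t)) (Set.Ioi 0) := by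
  intro a _ b _ h
  simp only at h
  have : Real.exp (-a) = Real.exp (-b) := by linarith
  have := Real.exp_injective this
  linarith

lemma phi_deriv : ∀ t ∈ Set.Ioi (0:ℝ),
    HasDerivWithinAt (fun t : ℝ => 1 - Real.exp (-t)) (Real.exp (-t)) (Set.Ioi 0) t := by
  intro t _
  have : HasDerivAt (fun t : ℝ => 1 - Real.exp (-t)) (Real.exp (-t)) t := by
    have h1 : HasDerivAt (fun t : ℝ => Real.exp (-t)) (-Real.exp (-t)) t := by
      simpa [Function.comp_def] using (Real.hasDerivAt_exp (-t)).comp t (hasDerivAt_neg t)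
    simpa [Pi.sub_def] using (hasDerivAt_const t (1:ℝ)).sub h1
  exact this.hasDerivWithinAt

lemma subst_eq (G : ℝ → ℝ) :
    ∫ u in Set.Ioo (0:ℝ) 1, G u
      = ∫ t in Set.Ioi (0:ℝ), |Real.exp (-t)| • G (1 - Real.exp (-t)) := by
  rw [← phi_img]
  exact integral_image_eq_integral_abs_deriv_smul measurableSet_Ioi phi_deriv phi_inj G

lemma subst_intg (G : ℝ → ℝ) :
    IntegrableOn G (Set.Ioo (0:ℝ) 1)
      ↔ IntegrableOn (fun t => |Real.exp (-t)| • G (1 - Real.exp (-t))) (Set.Ioi (0:ℝ)) := by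
  rw [← phi_img]
  exact integrableOn_image_iff_integrableOn_abs_deriv_smul measurableSet_Ioi phi_deriv phi_inj G

lemma key_pt (n c : ℕ) (t : ℝ) :
    |Real.exp (-t)| • ((-Real.log (1 - (1 - Real.exp (-t)))) ^ n * (1 - (1 - Real.exp (-t))) ^ c)
      = t ^ n * Real.exp (-(((c:ℝ) + 1) * t)) := by
  have h1 : (1:ℝ) - (1 - Real.exp (-t)) = Real.exp (-t) := by ring
  rw [h1, Real.log_exp, abs_of_pos (Real.exp_pos _), neg_neg, smul_eq_mul,
    ← Real.exp_nat_mul]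
  rw [show -(((c:ℝ)+1)*t) = (c:ℝ)*(-t) + (-t) by ring, Real.exp_add]
  ring

lemma gamma_intg (n c : ℕ) :
    IntegrableOn (fun t : ℝ => t ^ n * Real.exp (-(((c:ℝ) + 1) * t))) (Set.Ioi 0) := by
  have := integrableOn_rpow_mul_exp_neg_mul_rpow (p := 1) (s := n) (b := (c:ℝ)+1)
    (lt_of_lt_of_le neg_one_lt_zero (Nat.cast_nonneg n)) one_pos (by positivity)
  refine this.congr_fun (fun x hx => ?_) measurableSet_Ioi
  beta_reduce
  rw [Real.rpow_one, Real.rpow_natCast, neg_mul]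

lemma gamma_int (n c : ℕ) :
    ∫ t in Set.Ioi (0:ℝ), t ^ n * Real.exp (-(((c:ℝ) + 1) * t))
      = (Nat.factorial n : ℝ) / ((c:ℝ) + 1) ^ (n + 1) := by
  have h := Real.integral_rpow_mul_exp_neg_mul_Ioi (a := (n:ℝ)+1) (r := (c:ℝ)+1)
    (by positivity) (by positivity)
  have he : ∀ x ∈ Set.Ioi (0:ℝ),
      x ^ ((n:ℝ) + 1 - 1) * Real.exp (-(((c:ℝ)+1) * x)) = x ^ n * Real.exp (-(((c:ℝ)+1) * x)) := by
    intro x hx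
    rw [add_sub_cancel_right, Real.rpow_natCast]
  rw [setIntegral_congr_fun measurableSet_Ioi he] at h
  rw [h]
  have : ((n:ℝ) + 1) = ((n+1 : ℕ) : ℝ) := by push_cast; ring
  rw [this, Real.rpow_natCast]
  push_cast
  rw [Real.Gamma_nat_eq_factorial, div_pow, one_pow]
  ring

lemma mono_int (n c : ℕ) :
    ∫ u in Set.Ioo (0:ℝ) 1, (-Real.log (1 - u)) ^ n * (1 - u) ^ c
      = (Nat.factorial n : ℝ) / ((c:ℝ) + 1) ^ (n + 1) := by
  rw [subst_eq]
  rw [← gamma_int n c]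
  exact setIntegral_congr_fun measurableSet_Ioi (fun t _ => key_pt n c t)

lemma mono_intg (n c : ℕ) :
    IntegrableOn (fun u : ℝ => (-Real.log (1 - u)) ^ n * (1 - u) ^ c) (Set.Ioo (0:ℝ) 1) := by
  rw [subst_intg]
  exact (gamma_intg n c).congr_fun (fun t _ => (key_pt n c t).symm) measurableSet_Ioi

lemma my_cs {ν : Measure ℝ} (f h : ℝ → ℝ)
    (hf2 : Integrable (fun x => f x ^ 2) ν) (hh2 : Integrable (fun x => h x ^ 2) ν)
    (hfh : Integrable (fun x => f x * h x) ν) :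
    (∫ x, f x * h x ∂ν) ^ 2 ≤ (∫ x, f x ^ 2 ∂ν) * (∫ x, h x ^ 2 ∂ν) := by
  set A := ∫ x, f x ^ 2 ∂ν with hA
  set B := ∫ x, f x * h x ∂ν with hB
  set C := ∫ x, h x ^ 2 ∂ν with hC
  have key : ∀ t : ℝ, 0 ≤ A * (t * t) + (-2 * B) * t + C := by
    intro t
    have hpt : ∀ x, (0:ℝ) ≤ t ^ 2 * f x ^ 2 + (-2 * t) * (f x * h x) + h x ^ 2 :=
      fun x => by nlinarith [sq_nonneg (t * f x - h x)]
    have h0 : 0 ≤ ∫ x, (t ^ 2 * f x ^ 2 + (-2 * t) * (f x * h x) + h x ^ 2) ∂ν :=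
      integral_nonneg hpt
    have i1 : Integrable (fun x => t ^ 2 * f x ^ 2) ν := hf2.const_mul (t ^ 2)
    have i2 : Integrable (fun x => (-2 * t) * (f x * h x)) ν := hfh.const_mul (-2 * t)
    have i12 : Integrable (fun x => t ^ 2 * f x ^ 2 + (-2 * t) * (f x * h x)) ν := by
      exact i1.add i2
    rw [integral_add i12 hh2, integral_add i1 i2,
        MeasureTheory.integral_const_mul, MeasureTheory.integral_const_mul] at h0
    nlinarith [h0]
  have := discrim_le_zero key
  rw [discrim] at this
  nlinarith [this]

lemma recg_eq (k n : ℕ) (x : ℝ) :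
    recg k n x = ((k : ℝ) ^ (n + 1) / (Nat.factorial n)) *
      ((-Real.log (1 - x)) ^ n * (1 - x) ^ (k - 1)) := by
  rw [recg]; ring

lemma recg_sq_eq (k n : ℕ) (x : ℝ) :
    (recg k n x) ^ 2 = ((k : ℝ) ^ (n + 1) / (Nat.factorial n)) ^ 2 *
      ((-Real.log (1 - x)) ^ (2 * n) * (1 - x) ^ (2 * (k - 1))) := by
  rw [recg, mul_pow, mul_pow, ← pow_mul, ← pow_mul, Nat.mul_comm n 2, Nat.mul_comm (k-1) 2]
  ring

lemma recg_intg (k n : ℕ) : IntegrableOn (recg k n) (Set.Ioo (0:ℝ) 1) := by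
  have := (mono_intg n (k-1)).const_mul ((k : ℝ) ^ (n + 1) / (Nat.factorial n))
  exact MeasureTheory.IntegrableOn.congr_fun this (fun x _ => (recg_eq k n x).symm) measurableSet_Ioo

lemma recg_sq_intg (k n : ℕ) :
    IntegrableOn (fun x => (recg k n x) ^ 2) (Set.Ioo (0:ℝ) 1) := by
  have := (mono_intg (2*n) (2*(k-1))).const_mul (((k : ℝ) ^ (n + 1) / (Nat.factorial n)) ^ 2)
  exact MeasureTheory.IntegrableOn.congr_fun this (fun x _ => (recg_sq_eq k n x).symm) measurableSet_Ioo

lemma recg_int (k n : ℕ) (hk : 1 ≤ k) : ∫ u in Set.Ioo (0:ℝ) 1, recg k n u = 1 := by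
  simp_rw [recg_eq]
  rw [MeasureTheory.integral_const_mul, mono_int n (k-1)]
  have hc : ((k - 1 : ℕ) : ℝ) + 1 = (k : ℝ) := by
    rw [Nat.cast_sub hk]; push_cast; ring
  rw [hc]
  have h1 : (Nat.factorial n : ℝ) ≠ 0 := by positivity
  have h2 : (k : ℝ) ≠ 0 := by positivity
  field_simp

lemma recg_sq_int (k n : ℕ) (hk : 1 ≤ k) :
    ∫ u in Set.Ioo (0:ℝ) 1, (recg k n u) ^ 2
      = (k : ℝ) ^ (2 * (n + 1)) * (Nat.factorial (2 * n)) /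
        ((Nat.factorial n : ℝ) ^ 2 * (2 * (k : ℝ) - 1) ^ (2 * n + 1)) := by
  simp_rw [recg_sq_eq]
  rw [MeasureTheory.integral_const_mul, mono_int (2*n) (2*(k-1))]
  have hc : ((2 * (k - 1) : ℕ) : ℝ) + 1 = 2 * (k : ℝ) - 1 := by
    rw [Nat.cast_mul, Nat.cast_sub hk]; push_cast; ring
  rw [hc]
  have h1 : (Nat.factorial n : ℝ) ≠ 0 := by positivity
  have h3 : (2 * (k:ℝ) - 1) ≠ 0 := by
    have : (1:ℝ) ≤ (k:ℝ) := by exact_mod_cast hk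
    nlinarith
  rw [div_pow, ← pow_mul]
  have he : (n + 1) * 2 = 2 * (n + 1) := by ring
  rw [he]
  field_simp

end aux

/-- The mean-standard-deviation bound on the expected n-th k-th record value,
with the expectation written via the quantile function `Q = F⁻¹`:
`E R_n^{(k)} = ∫₀¹ Q(u) g_n^{(k)}(u) du`. -/
theorem stmt13 (k n : ℕ) (hk : 1 ≤ k) (μ σ : ℝ) (hσ : 0 < σ) (Q : ℝ → ℝ)
    (hmono : MonotoneOn Q (Set.Ioo 0 1))
    (hmean : ∫ u in (0:ℝ)..1, Q u = μ)
    (hvar : ∫ u in (0:ℝ)..1, (Q u - μ) ^ 2 = σ ^ 2)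
    (hint2 : IntervalIntegrable (fun u => (Q u) ^ 2) MeasureTheory.volume 0 1)
    (hint : IntervalIntegrable (fun u => Q u * recg k n u) MeasureTheory.volume 0 1) :
    ((∫ u in (0:ℝ)..1, Q u * recg k n u) - μ) / σ ≤
      Real.sqrt ((k : ℝ) ^ (2 * (n + 1)) * (Nat.factorial (2 * n)) /
        ((Nat.factorial n : ℝ) ^ 2 * (2 * (k : ℝ) - 1) ^ (2 * n + 1)) - 1) := by
  have hle : (0:ℝ) ≤ 1 := by norm_num
  set ν := MeasureTheory.volume.restrict (Set.Ioo (0:ℝ) 1) with hν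
  have conv : ∀ f : ℝ → ℝ, (∫ u in (0:ℝ)..1, f u) = ∫ u, f u ∂ν := by
    intro f
    rw [intervalIntegral.integral_of_le hle, MeasureTheory.integral_Ioc_eq_integral_Ioo]
  set K : ℝ := (k : ℝ) ^ (2 * (n + 1)) * (Nat.factorial (2 * n)) /
        ((Nat.factorial n : ℝ) ^ 2 * (2 * (k : ℝ) - 1) ^ (2 * n + 1)) with hK
  -- basic integrability facts on ν
  have hconst : ∀ c : ℝ, MeasureTheory.Integrable (fun _ : ℝ => c) ν := by
    intro c
    exact MeasureTheory.integrableOn_const measure_Ioo_lt_top.ne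
  have hEc : ∀ c : ℝ, (∫ _x, c ∂ν) = c := by
    intro c
    rw [MeasureTheory.integral_const]
    simp [hν, Real.volume_Ioo]
  have IQ2 : MeasureTheory.Integrable (fun u => Q u ^ 2) ν := by
    have := (intervalIntegrable_iff_integrableOn_Ioc_of_le hle).1 hint2
    exact this.mono_set Set.Ioo_subset_Ioc_self
  have IQg : MeasureTheory.Integrable (fun u => Q u * recg k n u) ν := by
    have := (intervalIntegrable_iff_integrableOn_Ioc_of_le hle).1 hint
    exact this.mono_set Set.Ioo_subset_Ioc_self
  have hQm : MeasureTheory.AEStronglyMeasurable Q ν :=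
    (aemeasurable_restrict_of_monotoneOn measurableSet_Ioo hmono).aestronglyMeasurable
  have IQ : MeasureTheory.Integrable Q ν := by
    refine MeasureTheory.Integrable.mono' ((IQ2.add (hconst 1)).div_const 2) hQm
      (MeasureTheory.ae_of_all _ fun u => ?_)
    simp only [Pi.add_apply]
    rw [Real.norm_eq_abs]
    nlinarith [sq_nonneg (|Q u| - 1), sq_abs (Q u), abs_nonneg (Q u)]
  have Ig : MeasureTheory.Integrable (recg k n) ν := recg_intg k n
  have Ig2 : MeasureTheory.Integrable (fun x => (recg k n x) ^ 2) ν := recg_sq_intg k n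
  -- integral values
  have hEQ : (∫ x, Q x ∂ν) = μ := (conv Q).symm.trans hmean
  have hEvar : (∫ x, (Q x - μ) ^ 2 ∂ν) = σ ^ 2 :=
    (conv (fun u => (Q u - μ) ^ 2)).symm.trans hvar
  have hEg : (∫ x, recg k n x ∂ν) = 1 := recg_int k n hk
  have hEg2 : (∫ x, (recg k n x) ^ 2 ∂ν) = K := recg_sq_int k n hk
  -- integrability of the centered products
  have If2 : MeasureTheory.Integrable (fun x => (Q x - μ) ^ 2) ν := by
    refine (((IQ2.add (IQ.const_mul (-2 * μ))).add (hconst (μ ^ 2))).congr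
      (MeasureTheory.ae_of_all _ fun x => ?_))
    simp only [Pi.add_apply]
    ring
  have Ih2 : MeasureTheory.Integrable (fun x => (recg k n x - 1) ^ 2) ν := by
    refine (((Ig2.add (Ig.const_mul (-2))).add (hconst 1)).congr
      (MeasureTheory.ae_of_all _ fun x => ?_))
    simp only [Pi.add_apply]
    ring
  have Ifh : MeasureTheory.Integrable (fun x => (Q x - μ) * (recg k n x - 1)) ν := by
    refine (((IQg.add (IQ.const_mul (-1))).add ((Ig.const_mul (-μ)).add (hconst μ))).congr
      (MeasureTheory.ae_of_all _ fun x => ?_))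
    simp only [Pi.add_apply]
    ring
  -- value of the cross term
  have hB : (∫ x, (Q x - μ) * (recg k n x - 1) ∂ν)
      = (∫ x, Q x * recg k n x ∂ν) - μ := by
    have e : (fun x => (Q x - μ) * (recg k n x - 1))
        = fun x => (Q x * recg k n x + (-1 : ℝ) * Q x) + ((-μ) * recg k n x + μ) := by
      funext x; ring
    rw [e]
    have i1 : MeasureTheory.Integrable (fun x => Q x * recg k n x + (-1 : ℝ) * Q x) ν := by
      exact IQg.add (IQ.const_mul _)
    have i2 : MeasureTheory.Integrable (fun x => (-μ) * recg k n x + μ) ν := by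
      exact (Ig.const_mul _).add (hconst μ)
    rw [MeasureTheory.integral_add i1 i2, MeasureTheory.integral_add IQg (IQ.const_mul _),
      MeasureTheory.integral_add (Ig.const_mul _) (hconst μ),
      MeasureTheory.integral_const_mul, MeasureTheory.integral_const_mul, hEQ, hEg, hEc]
    ring
  -- value of the second moment of h
  have hC : (∫ x, (recg k n x - 1) ^ 2 ∂ν) = K - 1 := by
    have e : (fun x => (recg k n x - 1) ^ 2)
        = fun x => ((recg k n x) ^ 2 + (-2 : ℝ) * recg k n x) + (1 : ℝ) := by
      funext x; ring
    rw [e]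
    have i1 : MeasureTheory.Integrable (fun x => (recg k n x) ^ 2 + (-2 : ℝ) * recg k n x) ν := by
      exact Ig2.add (Ig.const_mul _)
    rw [MeasureTheory.integral_add i1 (hconst 1), MeasureTheory.integral_add Ig2 (Ig.const_mul _),
      MeasureTheory.integral_const_mul, hEg2, hEg, hEc]
    ring
  -- Cauchy-Schwarz
  have cs := my_cs (fun x => Q x - μ) (fun x => recg k n x - 1) If2 Ih2 Ifh
  rw [hB, hEvar, hC] at cs
  set I : ℝ := ∫ x, Q x * recg k n x ∂ν with hI
  have hK1 : 0 ≤ K - 1 := by nlinarith [cs, sq_nonneg (I - μ), mul_pos hσ hσ]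
  rw [conv (fun u => Q u * recg k n u), ← hI, div_le_iff₀ hσ]
  calc I - μ ≤ |I - μ| := le_abs_self _
    _ = Real.sqrt ((I - μ) ^ 2) := (Real.sqrt_sq_eq_abs _).symm
    _ ≤ Real.sqrt (σ ^ 2 * (K - 1)) := Real.sqrt_le_sqrt cs
    _ = Real.sqrt (K - 1) * σ := by
        rw [Real.sqrt_mul (sq_nonneg σ), Real.sqrt_sq hσ.le, mul_comm]
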